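/- (Parameterized max-affine functions universally approximate partial convex functions.) Let X ⊆ ℝ^{d_x} be a nonempty compact convex set and Y ⊆ ℝ^{d_y} a nonempty compact set, and let f : X × Y → ℝ be continuous on (x, y) and convex in x for each fixed y ∈ Y. Then for every ε > 0 there exist N ∈ ℕ and continuous functions a_k : Y → ℝ^{d_x} and b_k : Y → ℝ for k = 1, …, N such that sup_{(x,y) ∈ X × Y} | f(x, y) − max_{1 ≤ k ≤ N} ( ⟨a_k(y), x⟩ + b_k(y) ) | ≤ ε. -/

import Mathlib

open Finset

private lemma pma_dot_abs_le {n : ℕ} {w u : Fin n → ℝ} {c r : ℝ}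
    (hw : ∀ j, |w j| ≤ c) (hu : ∀ j, |u j| ≤ r) :
    |∑ j, w j * u j| ≤ n * (c * r) := by
  calc |∑ j, w j * u j| ≤ ∑ j, |w j * u j| := Finset.abs_sum_le_sum_abs _ _
    _ ≤ ∑ _j : Fin n, c * r := by
        refine Finset.sum_le_sum fun j _ => ?_
        rw [abs_mul]
        exact mul_le_mul (hw j) (hu j) (abs_nonneg _) (le_trans (abs_nonneg _) (hw j))
    _ = n * (c * r) := by simp [Finset.card_univ, nsmul_eq_mul]

private lemma pma_exists_subgradient {n : ℕ} (F : (Fin n → ℝ) → ℝ)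
    (hconv : ConvexOn ℝ Set.univ F) (hcont : Continuous F) (x : Fin n → ℝ) :
    ∃ a : Fin n → ℝ, ∀ z, F x + ∑ j, a j * (z j - x j) ≤ F z := by
  classical
  set S : Set ((Fin n → ℝ) × ℝ) := {p | F p.1 < p.2} with hS
  have hGconv : ConvexOn ℝ Set.univ (fun p : (Fin n → ℝ) × ℝ => F p.1 - p.2) := by
    have h1 : ConvexOn ℝ Set.univ (fun p : (Fin n → ℝ) × ℝ => F p.1) := by
      have := hconv.comp_affineMap ((LinearMap.fst ℝ (Fin n → ℝ) ℝ).toAffineMap)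
      exact this
    have h2 : ConvexOn ℝ Set.univ (fun p : (Fin n → ℝ) × ℝ => -p.2) := by
      refine ⟨convex_univ, fun p _ q _ s t hs ht hst => le_of_eq ?_⟩
      simp [smul_eq_mul]; ring
    exact h1.add h2
  have hSconv : Convex ℝ S := by
    have := hGconv.convex_lt 0
    have hset : ({p ∈ Set.univ | F p.1 - p.2 < 0} : Set ((Fin n → ℝ) × ℝ)) = S := by
      ext p; simp [hS, sub_neg]
    rwa [hset] at this
  have hSopen : IsOpen S := isOpen_lt (by fun_prop) continuous_snd
  have hp₀ : ((x, F x) : (Fin n → ℝ) × ℝ) ∉ S := by simp [hS]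
  obtain ⟨φ, hφ⟩ := geometric_hahn_banach_open_point hSconv hSopen hp₀
  set c : ℝ := φ (0, 1) with hc_def
  have hsplit : ∀ (z : Fin n → ℝ) (t : ℝ), φ (z, t) = φ (z, 0) + t * c := by
    intro z t
    have h : ((z, t) : (Fin n → ℝ) × ℝ) = (z, 0) + t • ((0 : Fin n → ℝ), (1 : ℝ)) := by
      simp [Prod.ext_iff]
    rw [h, map_add, map_smul, smul_eq_mul, hc_def]
  have key : ∀ (z : Fin n → ℝ) (t : ℝ), F z < t → φ (z, 0) + t * c < φ (x, 0) + F x * c := by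
    intro z t ht
    have h := hφ (z, t) ht
    rw [hsplit z t, hsplit x (F x)] at h
    exact h
  have hc : c < 0 := by
    have h := key x (F x + 1) (by linarith)
    nlinarith
  have hcne : c ≠ 0 := ne_of_lt hc
  have main : ∀ z : Fin n → ℝ, φ (z, 0) + F z * c ≤ φ (x, 0) + F x * c := by
    intro z
    refine le_of_forall_pos_le_add fun e he => ?_
    have he' : 0 < e / (-c) := div_pos he (by linarith)
    have h := key z (F z + e / (-c)) (by linarith)
    have h2 : e / (-c) * c = -e := by
      field_simp
    have hexp : (F z + e / (-c)) * c = F z * c + e / (-c) * c := by ring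
    linarith
  set d : ℝ := -c with hd_def
  have hd : 0 < d := by rw [hd_def]; linarith
  set ψ : (Fin n → ℝ) →L[ℝ] ℝ := φ.comp (ContinuousLinearMap.inl ℝ (Fin n → ℝ) ℝ) with hψ_def
  have hψ : ∀ w, ψ w = φ (w, 0) := fun w => rfl
  refine ⟨fun j => ψ (fun j' => if j = j' then 1 else 0) / d, fun z => ?_⟩
  have hrep : ∀ w : Fin n → ℝ, ψ w = ∑ i, w i * ψ (fun j' => if i = j' then 1 else 0) := by
    intro w
    have := LinearMap.pi_apply_eq_sum_univ (ψ : (Fin n → ℝ) →ₗ[ℝ] ℝ) w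
    simpa [smul_eq_mul] using this
  have hsum : (∑ j, ψ (fun j' => if j = j' then 1 else 0) / d * (z j - x j))
      = (ψ z - ψ x) / d := by
    rw [← map_sub, hrep (z - x), Finset.sum_div]
    refine Finset.sum_congr rfl fun i _ => ?_
    have : (z - x) i = z i - x i := rfl
    rw [this]; ring
  rw [hsum]
  have h2 : (ψ z - ψ x) / d ≤ F z - F x := by
    rw [div_le_iff₀ hd]
    have h3 := main z
    rw [← hψ z, ← hψ x] at h3
    have h4 : (F z - F x) * d = F x * c - F z * c := by rw [hd_def]; ring
    linarith
  linarith

theorem pma_universal_approximation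
    (dx dy : ℕ)
    (X : Set (Fin dx → ℝ)) (Y : Set (Fin dy → ℝ))
    (hXne : X.Nonempty) (hXconv : Convex ℝ X) (hXcomp : IsCompact X)
    (hYne : Y.Nonempty) (hYcomp : IsCompact Y)
    (f : (Fin dx → ℝ) → (Fin dy → ℝ) → ℝ)
    (hfcont : ContinuousOn (fun q : (Fin dx → ℝ) × (Fin dy → ℝ) => f q.1 q.2) (X ×ˢ Y))
    (hfconv : ∀ y ∈ Y, ConvexOn ℝ X (fun x => f x y))
    (ε : ℝ) (hε : 0 < ε) :
    ∃ (N : ℕ) (a : Fin (N + 1) → (Fin dy → ℝ) → Fin dx → ℝ)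
      (b : Fin (N + 1) → (Fin dy → ℝ) → ℝ),
      (∀ k, ContinuousOn (a k) Y) ∧ (∀ k, ContinuousOn (b k) Y) ∧
      ∀ x ∈ X, ∀ y ∈ Y,
        |f x y -
          Finset.univ.sup' Finset.univ_nonempty
            (fun k : Fin (N + 1) => (∑ j, a k y j * x j) + b k y)| ≤ ε := by
  classical
  obtain ⟨x₀, hx₀⟩ := hXne
  obtain ⟨y₀, hy₀⟩ := hYne
  have hXYcomp : IsCompact (X ×ˢ Y) := hXcomp.prod hYcomp
  -- bound on f
  obtain ⟨M₀, hM₀⟩ := hXYcomp.exists_bound_of_continuousOn hfcont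
  set M := max M₀ 0 with hMdef
  have hM0 : 0 ≤ M := le_max_right _ _
  have hM : ∀ x ∈ X, ∀ y ∈ Y, |f x y| ≤ M := by
    intro x hx y hy
    have := hM₀ (x, y) (Set.mk_mem_prod hx hy)
    simp only [Real.norm_eq_abs] at this
    exact le_trans this (le_max_left _ _)
  -- bound on X
  obtain ⟨R₀, hR₀⟩ := hXcomp.isBounded.subset_closedBall 0
  set R := max R₀ 0 with hRdef
  have hR0 : 0 ≤ R := le_max_right _ _
  have hR : ∀ x ∈ X, ∀ j, |x j| ≤ R := by
    intro x hx j
    have h1 : ‖x‖ ≤ R₀ := by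
      have := hR₀ hx
      simpa [Metric.mem_closedBall, dist_zero_right] using this
    have h2 : |x j| ≤ ‖x‖ := by
      rw [← Real.norm_eq_abs]; exact norm_le_pi_norm x j
    exact le_trans (le_trans h2 h1) (le_max_left _ _)
  -- uniform continuity of f
  have hunif := hXYcomp.uniformContinuousOn_of_continuous hfcont
  rw [Metric.uniformContinuousOn_iff] at hunif
  obtain ⟨δ₁, hδ₁pos, hδ₁⟩ := hunif (ε/4) (by linarith)
  set C := 2 * M / δ₁ with hCdef
  have hC0 : 0 ≤ C := by positivity
  -- the regularized function
  set F : (Fin dy → ℝ) → (Fin dx → ℝ) → ℝ :=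
    fun y x => sInf ((fun v => f v y + C * dist x v) '' X) with hFdef
  have hFbdd : ∀ y ∈ Y, ∀ x : Fin dx → ℝ,
      BddBelow ((fun v => f v y + C * dist x v) '' X) := by
    intro y hy x
    refine ⟨-M, ?_⟩
    rintro b ⟨v, hv, rfl⟩
    have h1 := (abs_le.1 (hM v hv y hy)).1
    have h2 : 0 ≤ C * dist x v := mul_nonneg hC0 dist_nonneg
    simp only; linarith
  have hFne : ∀ (y : Fin dy → ℝ) (x : Fin dx → ℝ),
      ((fun v => f v y + C * dist x v) '' X).Nonempty :=
    fun y x => ⟨_, ⟨x₀, hx₀, rfl⟩⟩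
  have hFle : ∀ y ∈ Y, ∀ x ∈ X, F y x ≤ f x y := by
    intro y hy x hx
    have hmem : f x y + C * dist x x ∈ (fun v => f v y + C * dist x v) '' X := ⟨x, hx, rfl⟩
    have := csInf_le (hFbdd y hy x) hmem
    simpa [hFdef, dist_self] using this
  have hFge : ∀ y ∈ Y, ∀ x ∈ X, f x y - ε/2 ≤ F y x := by
    intro y hy x hx
    rw [hFdef]
    refine le_csInf (hFne y x) ?_
    rintro b ⟨v, hv, rfl⟩
    simp only
    rcases lt_or_ge (dist x v) δ₁ with hlt | hge
    · have hd : dist ((x, y) : (Fin dx → ℝ) × (Fin dy → ℝ)) (v, y) = dist x v := by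
        simp [Prod.dist_eq, dist_self, max_eq_left dist_nonneg]
      have h := hδ₁ (x, y) (Set.mk_mem_prod hx hy) (v, y) (Set.mk_mem_prod hv hy)
        (by rw [hd]; exact hlt)
      rw [Real.dist_eq] at h
      have habs := abs_lt.1 h
      have h2 : 0 ≤ C * dist x v := mul_nonneg hC0 dist_nonneg
      linarith [habs.2]
    · have h2M : C * δ₁ = 2 * M := by
        rw [hCdef]; field_simp
      have h3 : C * δ₁ ≤ C * dist x v := mul_le_mul_of_nonneg_left hge hC0
      have h4 := (abs_le.1 (hM x hx y hy)).2
      have h5 := (abs_le.1 (hM v hv y hy)).1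
      linarith
  have hFlip : ∀ y ∈ Y, ∀ x z : Fin dx → ℝ, F y x ≤ F y z + C * dist x z := by
    intro y hy x z
    have hgoal : F y x - C * dist x z ≤ F y z := by
      rw [hFdef]
      refine le_csInf (hFne y z) ?_
      rintro b ⟨v, hv, rfl⟩
      simp only
      have h1 : F y x ≤ f v y + C * dist x v := csInf_le (hFbdd y hy x) ⟨v, hv, rfl⟩
      have h2 : dist x v ≤ dist x z + dist z v := dist_triangle x z v
      have h3 : C * dist x v ≤ C * (dist x z + dist z v) := mul_le_mul_of_nonneg_left h2 hC0
      linarith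
    linarith
  have hFcont : ∀ y ∈ Y, Continuous (F y) := by
    intro y hy
    have hlip : LipschitzWith (Real.toNNReal C) (F y) := by
      refine LipschitzWith.of_dist_le_mul fun x z => ?_
      rw [Real.dist_eq, Real.coe_toNNReal C hC0]
      rw [abs_le]
      constructor
      · have := hFlip y hy z x
        rw [dist_comm z x] at this
        linarith
      · have := hFlip y hy x z
        linarith
    exact hlip.continuous
  have hFconv : ∀ y ∈ Y, ConvexOn ℝ Set.univ (F y) := by
    intro y hy
    refine ⟨convex_univ, fun u _ v _ s t hs ht hst => ?_⟩
    simp only [smul_eq_mul]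
    refine le_of_forall_pos_le_add fun e he => ?_
    have hu_lt : F y u < F y u + e/2 := by linarith
    have hv_lt : F y v < F y v + e/2 := by linarith
    obtain ⟨b₁, hb₁mem, hb₁⟩ := exists_lt_of_csInf_lt (hFne y u) hu_lt
    obtain ⟨v₁, hv₁, rfl⟩ := hb₁mem
    obtain ⟨b₂, hb₂mem, hb₂⟩ := exists_lt_of_csInf_lt (hFne y v) hv_lt
    obtain ⟨v₂, hv₂, rfl⟩ := hb₂mem
    simp only at hb₁ hb₂
    have hmem : s • v₁ + t • v₂ ∈ X := hXconv hv₁ hv₂ hs ht hst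
    have h1 : F y (s • u + t • v) ≤ f (s • v₁ + t • v₂) y
        + C * dist (s • u + t • v) (s • v₁ + t • v₂) :=
      csInf_le (hFbdd y hy _) ⟨_, hmem, rfl⟩
    have h2 : f (s • v₁ + t • v₂) y ≤ s * f v₁ y + t * f v₂ y := by
      have := (hfconv y hy).2 hv₁ hv₂ hs ht hst
      simpa [smul_eq_mul] using this
    have h3 : dist (s • u + t • v) (s • v₁ + t • v₂) ≤ s * dist u v₁ + t * dist v v₂ := by
      rw [dist_eq_norm]
      have heq : (s • u + t • v) - (s • v₁ + t • v₂) = s • (u - v₁) + t • (v - v₂) := by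
        module
      rw [heq]
      calc ‖s • (u - v₁) + t • (v - v₂)‖ ≤ ‖s • (u - v₁)‖ + ‖t • (v - v₂)‖ := norm_add_le _ _
        _ = s * ‖u - v₁‖ + t * ‖v - v₂‖ := by
            rw [norm_smul, norm_smul, Real.norm_eq_abs, Real.norm_eq_abs,
              abs_of_nonneg hs, abs_of_nonneg ht]
        _ = s * dist u v₁ + t * dist v v₂ := by rw [dist_eq_norm, dist_eq_norm]
    have h4 : C * dist (s • u + t • v) (s • v₁ + t • v₂)
        ≤ C * (s * dist u v₁ + t * dist v v₂) := mul_le_mul_of_nonneg_left h3 hC0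
    have h5 : s * (f v₁ y + C * dist u v₁) ≤ s * (F y u + e/2) :=
      mul_le_mul_of_nonneg_left hb₁.le hs
    have h6 : t * (f v₂ y + C * dist v v₂) ≤ t * (F y v + e/2) :=
      mul_le_mul_of_nonneg_left hb₂.le ht
    nlinarith [h1, h2, h4, h5, h6]
  -- the slope grid
  set δ₂ := ε / (4 * (dx * R + 1)) with hδ₂def
  have hδ₂pos : 0 < δ₂ := by positivity
  have hBcomp : IsCompact (Metric.closedBall (0 : Fin dx → ℝ) C) := isCompact_closedBall _ _
  obtain ⟨T, hTsub, hTfin, hTcov⟩ := hBcomp.finite_cover_balls hδ₂pos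
  have hTne : T.Nonempty := by
    have h0 : (0 : Fin dx → ℝ) ∈ Metric.closedBall 0 C := Metric.mem_closedBall_self hC0
    obtain ⟨u, hu, _⟩ := Set.mem_iUnion₂.1 (hTcov h0)
    exact ⟨u, hu⟩
  set sFin := hTfin.toFinset with hsFin
  have hsne : sFin.Nonempty := (Set.Finite.toFinset_nonempty hTfin).2 hTne
  set N := sFin.card - 1 with hNdef
  have hNcard : sFin.card = N + 1 := (Nat.succ_pred_eq_of_pos (Finset.card_pos.2 hsne)).symm
  have hlen : sFin.toList.length = N + 1 := by rw [Finset.length_toList, hNcard]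
  set w : Fin (N+1) → (Fin dx → ℝ) := fun k => sFin.toList.get (Fin.cast hlen.symm k) with hwdef
  have hwT : ∀ k, w k ∈ T := by
    intro k
    have h1 : sFin.toList.get (Fin.cast hlen.symm k) ∈ sFin.toList := by
      have := List.get_mem sFin.toList (Fin.cast hlen.symm k)
      simpa using this
    have h2 := Finset.mem_toList.1 h1
    exact (Set.Finite.mem_toFinset hTfin).1 h2
  have hwnet : ∀ u ∈ Metric.closedBall (0 : Fin dx → ℝ) C, ∃ k, dist u (w k) < δ₂ := by
    intro u hu
    obtain ⟨t, ht, hmem⟩ := Set.mem_iUnion₂.1 (hTcov hu)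
    have h1 : t ∈ sFin.toList := Finset.mem_toList.2 ((Set.Finite.mem_toFinset hTfin).2 ht)
    obtain ⟨i, hi⟩ := List.mem_iff_get.1 h1
    refine ⟨Fin.cast hlen i, ?_⟩
    have hw : w (Fin.cast hlen i) = t := by
      rw [hwdef]
      simp only
      have : Fin.cast hlen.symm (Fin.cast hlen i) = i := by
        apply Fin.ext; rfl
      rw [this, hi]
    rw [hw]
    exact Metric.mem_ball.1 hmem
  have hwC : ∀ k j, |w k j| ≤ C := by
    intro k j
    have h1 : ‖w k‖ ≤ C := by
      have := hTsub (hwT k)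
      simpa [Metric.mem_closedBall, dist_zero_right] using this
    have h2 : |w k j| ≤ ‖w k‖ := by
      rw [← Real.norm_eq_abs]; exact norm_le_pi_norm (w k) j
    linarith
  -- the b functions
  set b : Fin (N+1) → (Fin dy → ℝ) → ℝ := fun k y =>
    sInf ((fun p : (Fin dx → ℝ) × (Fin dx → ℝ) =>
      f p.2 y + C * dist p.1 p.2 - ∑ j, w k j * p.1 j) '' (X ×ˢ X)) with hbdef
  have hQne : ∀ (k : Fin (N+1)) (y : Fin dy → ℝ),
      ((fun p : (Fin dx → ℝ) × (Fin dx → ℝ) =>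
        f p.2 y + C * dist p.1 p.2 - ∑ j, w k j * p.1 j) '' (X ×ˢ X)).Nonempty :=
    fun k y => ⟨_, ⟨(x₀, x₀), Set.mk_mem_prod hx₀ hx₀, rfl⟩⟩
  have hQbdd : ∀ (k : Fin (N+1)), ∀ y ∈ Y,
      BddBelow ((fun p : (Fin dx → ℝ) × (Fin dx → ℝ) =>
        f p.2 y + C * dist p.1 p.2 - ∑ j, w k j * p.1 j) '' (X ×ˢ X)) := by
    intro k y hy
    refine ⟨-M - dx * (C * R), ?_⟩
    rintro z ⟨⟨u, v⟩, ⟨hu, hv⟩, rfl⟩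
    have h1 := (abs_le.1 (hM v hv y hy)).1
    have h2 := (abs_le.1 (pma_dot_abs_le (hwC k) (hR u hu))).2
    have h3 : 0 ≤ C * dist u v := mul_nonneg hC0 dist_nonneg
    simp only; linarith
  refine ⟨N, fun k _ => w k, b, fun k => continuousOn_const, ?_, ?_⟩
  · -- continuity of b k on Y
    intro k
    have hGcont : ContinuousOn (fun q : ((Fin dx → ℝ) × (Fin dx → ℝ)) × (Fin dy → ℝ) =>
        f q.1.2 q.2 + C * dist q.1.1 q.1.2 - ∑ j, w k j * q.1.1 j) ((X ×ˢ X) ×ˢ Y) := by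
      have hpart : ContinuousOn (fun q : ((Fin dx → ℝ) × (Fin dx → ℝ)) × (Fin dy → ℝ) =>
          f q.1.2 q.2) ((X ×ˢ X) ×ˢ Y) := by
        have hmap : Set.MapsTo (fun q : ((Fin dx → ℝ) × (Fin dx → ℝ)) × (Fin dy → ℝ) =>
            (q.1.2, q.2)) ((X ×ˢ X) ×ˢ Y) (X ×ˢ Y) := by
          rintro ⟨⟨u, v⟩, y⟩ ⟨⟨hu, hv⟩, hy⟩
          exact ⟨hv, hy⟩
        exact hfcont.comp (Continuous.continuousOn (by fun_prop)) hmap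
      have hrest : Continuous (fun q : ((Fin dx → ℝ) × (Fin dx → ℝ)) × (Fin dy → ℝ) =>
          C * dist q.1.1 q.1.2 - ∑ j, w k j * q.1.1 j) := by
        apply Continuous.sub
        · fun_prop
        · apply continuous_finset_sum
          intro j _
          fun_prop
      have := hpart.add hrest.continuousOn
      simpa only [Pi.add_def, add_sub_assoc] using this
    have hKcomp : IsCompact ((X ×ˢ X) ×ˢ Y) := (hXcomp.prod hXcomp).prod hYcomp
    have hGunif := hKcomp.uniformContinuousOn_of_continuous hGcont
    rw [Metric.uniformContinuousOn_iff] at hGunif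
    rw [Metric.continuousOn_iff]
    intro y hy e he
    obtain ⟨δ, hδpos, hδ⟩ := hGunif (e/2) (by linarith)
    refine ⟨δ, hδpos, fun y' hy' hyy' => ?_⟩
    have key : ∀ y1, y1 ∈ Y → ∀ y2, y2 ∈ Y → dist y1 y2 < δ → b k y1 - e/2 ≤ b k y2 := by
      intro y1 hy1 y2 hy2 h12
      rw [hbdef]
      simp only
      refine le_csInf (hQne k y2) ?_
      rintro z ⟨⟨u, v⟩, ⟨hu, hv⟩, rfl⟩
      have hq1 : (((u, v), y1) : ((Fin dx → ℝ) × (Fin dx → ℝ)) × (Fin dy → ℝ))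
          ∈ (X ×ˢ X) ×ˢ Y := ⟨⟨hu, hv⟩, hy1⟩
      have hq2 : (((u, v), y2) : ((Fin dx → ℝ) × (Fin dx → ℝ)) × (Fin dy → ℝ))
          ∈ (X ×ˢ X) ×ˢ Y := ⟨⟨hu, hv⟩, hy2⟩
      have hdq : dist (((u, v), y1) : ((Fin dx → ℝ) × (Fin dx → ℝ)) × (Fin dy → ℝ))
          ((u, v), y2) = dist y1 y2 := by
        simp [Prod.dist_eq, dist_self, max_eq_right dist_nonneg]
      have hG12 := hδ _ hq1 _ hq2 (by rw [hdq]; exact h12)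
      rw [Real.dist_eq] at hG12
      have habs := abs_lt.1 hG12
      have h1 : b k y1 ≤ f v y1 + C * dist u v - ∑ j, w k j * u j :=
        csInf_le (hQbdd k y1 hy1) ⟨(u, v), Set.mk_mem_prod hu hv, rfl⟩
      simp only at habs h1 ⊢
      linarith [habs.2]
    have hA := key y' hy' y hy (by rw [dist_comm] at hyy'; rw [dist_comm]; exact hyy')
    have hB := key y hy y' hy' (by rw [dist_comm]; exact hyy')
    rw [Real.dist_eq, abs_lt]
    constructor <;> linarith
  · -- the approximation estimate
    intro x hx y hy
    have hub : ∀ kk : Fin (N+1), (∑ j, w kk j * x j) + b kk y ≤ f x y := by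
      intro kk
      have hel : f x y + C * dist x x - ∑ j, w kk j * x j ∈
          ((fun p : (Fin dx → ℝ) × (Fin dx → ℝ) =>
            f p.2 y + C * dist p.1 p.2 - ∑ j, w kk j * p.1 j) '' (X ×ˢ X)) :=
        ⟨(x, x), Set.mk_mem_prod hx hx, rfl⟩
      have h := csInf_le (hQbdd kk y hy) hel
      rw [dist_self] at h
      have hb' : b kk y ≤ f x y - ∑ j, w kk j * x j := by
        rw [hbdef]; simp only; linarith
      linarith
    obtain ⟨a, ha⟩ := pma_exists_subgradient (F y) (hFconv y hy) (hFcont y hy) x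
    have haC : ∀ j, |a j| ≤ C := by
      intro j
      have hplus := ha (x + Pi.single j 1)
      have hminus := ha (x - Pi.single j 1)
      have hsum1 : (∑ i, a i * (((x + Pi.single j 1 : Fin dx → ℝ)) i - x i)) = a j := by
        rw [Finset.sum_eq_single_of_mem j (Finset.mem_univ j)]
        · simp [Pi.single_eq_same]
        · intro i _ hij
          simp [Pi.single_apply, hij]
      have hsum2 : (∑ i, a i * (((x - Pi.single j 1 : Fin dx → ℝ)) i - x i)) = -a j := by
        rw [Finset.sum_eq_single_of_mem j (Finset.mem_univ j)]
        · simp [Pi.single_eq_same]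
        · intro i _ hij
          simp [Pi.single_apply, hij]
      have hd1 : F y (x + Pi.single j 1) ≤ F y x + C := by
        have := hFlip y hy (x + Pi.single j 1) x
        have hdd : dist (x + Pi.single j 1) x = 1 := by
          rw [dist_eq_norm, add_sub_cancel_left, Pi.norm_single, norm_one]
        rw [hdd, mul_one] at this
        exact this
      have hd2 : F y (x - Pi.single j 1) ≤ F y x + C := by
        have := hFlip y hy (x - Pi.single j 1) x
        have hdd : dist (x - Pi.single j 1) x = 1 := by
          rw [dist_eq_norm, sub_sub_cancel_left, norm_neg, Pi.norm_single, norm_one]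
        rw [hdd, mul_one] at this
        exact this
      rw [hsum1] at hplus
      rw [hsum2] at hminus
      rw [abs_le]
      constructor <;> linarith
    have haB : a ∈ Metric.closedBall (0 : Fin dx → ℝ) C := by
      rw [Metric.mem_closedBall, dist_zero_right]
      refine (pi_norm_le_iff_of_nonneg hC0).2 fun j => ?_
      rw [Real.norm_eq_abs]; exact haC j
    obtain ⟨k, hk⟩ := hwnet a haB
    have hawk : ∀ j, |a j - w k j| ≤ δ₂ := by
      intro j
      have h1 : ‖a - w k‖ ≤ δ₂ := by rw [← dist_eq_norm]; exact hk.le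
      have h2 : |a j - w k j| ≤ ‖a - w k‖ := by
        have := norm_le_pi_norm (a - w k) j
        simpa [Real.norm_eq_abs] using this
      linarith
    have hlb : F y x - (∑ j, a j * x j) - dx * (δ₂ * R) ≤ b k y := by
      rw [hbdef]
      simp only
      refine le_csInf (hQne k y) ?_
      rintro z ⟨⟨u, v⟩, ⟨hu, hv⟩, rfl⟩
      have h1 : F y u ≤ f v y + C * dist u v := csInf_le (hFbdd y hy u) ⟨v, hv, rfl⟩
      have h2 := ha u
      have h3 := (abs_le.1 (pma_dot_abs_le hawk (hR u hu))).1
      have hs1 : (∑ j, a j * (u j - x j)) = (∑ j, a j * u j) - ∑ j, a j * x j := by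
        rw [← Finset.sum_sub_distrib]
        exact Finset.sum_congr rfl fun j _ => by ring
      have hs2 : (∑ j, (a j - w k j) * u j) = (∑ j, a j * u j) - ∑ j, w k j * u j := by
        rw [← Finset.sum_sub_distrib]
        exact Finset.sum_congr rfl fun j _ => by ring
      rw [hs1] at h2
      rw [hs2] at h3
      simp only
      linarith
    have hawk' : ∀ j, |w k j - a j| ≤ δ₂ := by
      intro j; rw [abs_sub_comm]; exact hawk j
    have hwx := (abs_le.1 (pma_dot_abs_le hawk' (hR x hx))).1
    have hFgex := hFge y hy x hx
    have hdsmall : dx * (δ₂ * R) ≤ ε/4 := by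
      have heq : dx * (δ₂ * R) = (dx * R) * (ε / (4 * (dx * R + 1))) := by
        rw [hδ₂def]; ring
      have h0 : (0:ℝ) ≤ (dx : ℝ) * R := by positivity
      have hden : (0:ℝ) < 4 * ((dx:ℝ) * R + 1) := by positivity
      rw [heq, ← mul_div_assoc, div_le_div_iff₀ hden (by norm_num : (0:ℝ) < 4)]
      nlinarith [hε.le]
    have hs3 : (∑ j, w k j * x j) = (∑ j, a j * x j) + ∑ j, (w k j - a j) * x j := by
      rw [← Finset.sum_add_distrib]
      exact Finset.sum_congr rfl fun j _ => by ring
    have hlow : f x y - ε ≤ (∑ j, w k j * x j) + b k y := by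
      have h5 : -(dx * (δ₂ * R)) ≤ ∑ j, (w k j - a j) * x j := hwx
      linarith [hlb, hFgex]
    have hsup_le : (Finset.univ.sup' Finset.univ_nonempty
        (fun kk : Fin (N + 1) => (∑ j, w kk j * x j) + b kk y)) ≤ f x y :=
      Finset.sup'_le _ _ fun kk _ => hub kk
    have hle_sup : f x y - ε ≤ Finset.univ.sup' Finset.univ_nonempty
        (fun kk : Fin (N + 1) => (∑ j, w kk j * x j) + b kk y) :=
      le_trans hlow (Finset.le_sup'
        (fun kk : Fin (N + 1) => (∑ j, w kk j * x j) + b kk y) (Finset.mem_univ k))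
    show |f x y - Finset.univ.sup' Finset.univ_nonempty
        (fun kk : Fin (N + 1) => (∑ j, w kk j * x j) + b kk y)| ≤ ε
    rw [abs_le]
    constructor <;> [linarith; linarith]
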